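/- For the upper-triangular preconditioner X_SU = U⁻¹ Q: a nonzero vector x satisfies X_SU A x = λ x if and only if y = U x satisfies Q L S y = λ y; hence spec(X_SU A) = spec(Q L S), which for Q L S block lower triangular with diagonal blocks I, Q_E S_E, Q_p S_p lies in [c₁, c₂]. -/

import Mathlib

open Matrix

/-- A 3×3 block matrix. -/
def blk3 {α : Type*} {l m n : Type*}
    (A11 : Matrix l l α) (A12 : Matrix l m α) (A13 : Matrix l n α)
    (A21 : Matrix m l α) (A22 : Matrix m m α) (A23 : Matrix m n α)
    (A31 : Matrix n l α) (A32 : Matrix n m α) (A33 : Matrix n n α) :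
    Matrix (l ⊕ m ⊕ n) (l ⊕ m ⊕ n) α :=
  Matrix.of fun i j =>
    match i, j with
    | Sum.inl i, Sum.inl j => A11 i j
    | Sum.inl i, Sum.inr (Sum.inl j) => A12 i j
    | Sum.inl i, Sum.inr (Sum.inr j) => A13 i j
    | Sum.inr (Sum.inl i), Sum.inl j => A21 i j
    | Sum.inr (Sum.inl i), Sum.inr (Sum.inl j) => A22 i j
    | Sum.inr (Sum.inl i), Sum.inr (Sum.inr j) => A23 i j
    | Sum.inr (Sum.inr i), Sum.inl j => A31 i j
    | Sum.inr (Sum.inr i), Sum.inr (Sum.inl j) => A32 i j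
    | Sum.inr (Sum.inr i), Sum.inr (Sum.inr j) => A33 i j


lemma blk3_mulVec {l m n : Type*} [Fintype l] [Fintype m] [Fintype n]
    (A11 : Matrix l l ℝ) (A12 : Matrix l m ℝ) (A13 : Matrix l n ℝ)
    (A21 : Matrix m l ℝ) (A22 : Matrix m m ℝ) (A23 : Matrix m n ℝ)
    (A31 : Matrix n l ℝ) (A32 : Matrix n m ℝ) (A33 : Matrix n n ℝ)
    (v : (l ⊕ m ⊕ n) → ℝ) :
    (blk3 A11 A12 A13 A21 A22 A23 A31 A32 A33) *ᵥ v =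
      Sum.elim (A11 *ᵥ (v ∘ Sum.inl) + A12 *ᵥ (v ∘ Sum.inr ∘ Sum.inl) + A13 *ᵥ (v ∘ Sum.inr ∘ Sum.inr))
        (Sum.elim (A21 *ᵥ (v ∘ Sum.inl) + A22 *ᵥ (v ∘ Sum.inr ∘ Sum.inl) + A23 *ᵥ (v ∘ Sum.inr ∘ Sum.inr))
          (A31 *ᵥ (v ∘ Sum.inl) + A32 *ᵥ (v ∘ Sum.inr ∘ Sum.inl) + A33 *ᵥ (v ∘ Sum.inr ∘ Sum.inr))) := by
  funext i
  rcases i with i | i | i <;>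
    simp [blk3, Matrix.mulVec, dotProduct, Fintype.sum_sum_type, Function.comp] <;> ring

/-- For X_SU = U⁻¹ Q and A = L S U: a nonzero x satisfies
X_SU A x = μ x iff y = U x satisfies Q L S y = μ y; hence the eigenvalues of
X_SU A are those of the block lower triangular matrix Q L S with diagonal
blocks I, Q_E S_E, Q_p S_p, and lie in [c₁, c₂]. -/
theorem XSU_eigen {nB nE nP : ℕ} (τ : ℝ) (hτ : 0 < τ) (c₁ c₂ : ℝ)
    (hc₁ : 0 < c₁) (hc₁1 : c₁ ≤ 1) (h1c₂ : 1 ≤ c₂)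
    (SE QE : Matrix (Fin nE) (Fin nE) ℝ) (Sp Qp : Matrix (Fin nP) (Fin nP) ℝ)
    (L21 : Matrix (Fin nE) (Fin nB) ℝ) (L31 : Matrix (Fin nP) (Fin nB) ℝ)
    (L32 : Matrix (Fin nP) (Fin nE) ℝ)
    (Q L S U : Matrix (Fin nB ⊕ Fin nE ⊕ Fin nP) (Fin nB ⊕ Fin nE ⊕ Fin nP) ℝ)
    (hQ : Q = blk3 ((τ / 2) • (1 : Matrix (Fin nB) (Fin nB) ℝ)) 0 0 0 QE 0 0 0 Qp)
    (hS : S = blk3 ((2 / τ) • (1 : Matrix (Fin nB) (Fin nB) ℝ)) 0 0 0 SE 0 0 0 Sp)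
    (hLmat : L = blk3 (1 : Matrix (Fin nB) (Fin nB) ℝ) 0 0
        L21 (1 : Matrix (Fin nE) (Fin nE) ℝ) 0
        L31 L32 (1 : Matrix (Fin nP) (Fin nP) ℝ))
    (hU : IsUnit U.det)
    (hQESE : ∀ (μ : ℝ) (x : Fin nE → ℝ), x ≠ 0 → (QE * SE) *ᵥ x = μ • x →
      c₁ ≤ μ ∧ μ ≤ c₂)
    (hQpSp : ∀ (μ : ℝ) (x : Fin nP → ℝ), x ≠ 0 → (Qp * Sp) *ᵥ x = μ • x →
      c₁ ≤ μ ∧ μ ≤ c₂) :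
    (∀ (μ : ℝ) (x : (Fin nB ⊕ Fin nE ⊕ Fin nP) → ℝ), x ≠ 0 →
      (((U⁻¹ * Q) * (L * S * U)) *ᵥ x = μ • x ↔
        (Q * L * S) *ᵥ (U *ᵥ x) = μ • (U *ᵥ x)))
    ∧
    (∀ (μ : ℝ) (x : (Fin nB ⊕ Fin nE ⊕ Fin nP) → ℝ), x ≠ 0 →
      ((U⁻¹ * Q) * (L * S * U)) *ᵥ x = μ • x → c₁ ≤ μ ∧ μ ≤ c₂) := by
  have hUU : U * U⁻¹ = 1 := Matrix.mul_nonsing_inv U hU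
  have hUU' : U⁻¹ * U = 1 := Matrix.nonsing_inv_mul U hU
  have key : ∀ (μ : ℝ) (x : (Fin nB ⊕ Fin nE ⊕ Fin nP) → ℝ),
      (((U⁻¹ * Q) * (L * S * U)) *ᵥ x = μ • x ↔
        (Q * L * S) *ᵥ (U *ᵥ x) = μ • (U *ᵥ x)) := by
    intro μ x
    have hm1 : U * ((U⁻¹ * Q) * (L * S * U)) = (Q * L * S) * U := by
      calc U * ((U⁻¹ * Q) * (L * S * U)) = (U * U⁻¹) * (Q * (L * S * U)) := by
            simp [mul_assoc]
        _ = (Q * L * S) * U := by rw [hUU]; simp [mul_assoc]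
    have hm2 : U⁻¹ * ((Q * L * S) * U) = (U⁻¹ * Q) * (L * S * U) := by
      simp [mul_assoc]
    constructor
    · intro h
      have h2 := congrArg (fun v => U *ᵥ v) h
      simp only [Matrix.mulVec_mulVec, Matrix.mulVec_smul] at h2
      rw [hm1] at h2
      rw [Matrix.mulVec_mulVec]
      exact h2
    · intro h
      rw [Matrix.mulVec_mulVec] at h
      have h2 := congrArg (fun v => U⁻¹ *ᵥ v) h
      simp only [Matrix.mulVec_mulVec, Matrix.mulVec_smul] at h2
      rw [hm2] at h2
      rwa [hUU', Matrix.one_mulVec] at h2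
  refine ⟨fun μ x _ => key μ x, fun μ x hx h => ?_⟩
  have hy0 : U *ᵥ x ≠ 0 := by
    intro h0
    apply hx
    have : (U⁻¹ * U) *ᵥ x = U⁻¹ *ᵥ (U *ᵥ x) := (Matrix.mulVec_mulVec _ _ _).symm
    rw [hUU', Matrix.one_mulVec, h0, Matrix.mulVec_zero] at this
    exact this
  have hyeq : (Q * L * S) *ᵥ (U *ᵥ x) = μ • (U *ᵥ x) := (key μ x).mp h
  set y := U *ᵥ x with hydef
  set y1 : Fin nB → ℝ := y ∘ Sum.inl with hy1
  set y2 : Fin nE → ℝ := y ∘ Sum.inr ∘ Sum.inl with hy2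
  set y3 : Fin nP → ℝ := y ∘ Sum.inr ∘ Sum.inr with hy3
  have hτ' : (τ : ℝ) ≠ 0 := ne_of_gt hτ
  have hSy : S *ᵥ y = Sum.elim ((2 / τ) • y1) (Sum.elim (SE *ᵥ y2) (Sp *ᵥ y3)) := by
    rw [hS, blk3_mulVec]
    simp [Matrix.smul_mulVec, hy1, hy2, hy3]
  have hLz : L *ᵥ (S *ᵥ y) =
      Sum.elim ((2 / τ) • y1)
        (Sum.elim (L21 *ᵥ ((2 / τ) • y1) + SE *ᵥ y2)
          (L31 *ᵥ ((2 / τ) • y1) + L32 *ᵥ (SE *ᵥ y2) + Sp *ᵥ y3)) := by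
    rw [hSy, hLmat, blk3_mulVec]
    simp [Sum.elim_comp_inl, Sum.elim_comp_inr, ← Function.comp_assoc, add_comm, add_assoc,
      add_left_comm]
  have hτ2 : (τ / 2) * (2 / τ) = 1 := by field_simp
  have hQLS : (Q * L * S) *ᵥ y =
      Sum.elim y1
        (Sum.elim (QE *ᵥ (L21 *ᵥ ((2 / τ) • y1)) + (QE * SE) *ᵥ y2)
          (Qp *ᵥ (L31 *ᵥ ((2 / τ) • y1)) + Qp *ᵥ (L32 *ᵥ (SE *ᵥ y2)) + (Qp * Sp) *ᵥ y3)) := by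
    rw [← Matrix.mulVec_mulVec, ← Matrix.mulVec_mulVec, hLz, hQ, blk3_mulVec]
    simp only [Sum.elim_comp_inl, Sum.elim_comp_inr, ← Function.comp_assoc,
      Matrix.zero_mulVec, add_zero, zero_add, Matrix.smul_mulVec, Matrix.one_mulVec,
      smul_smul, hτ2, one_smul, Matrix.mulVec_add, Matrix.mulVec_mulVec, zero_mul,
      Matrix.zero_mul, mul_zero]
  rw [hQLS] at hyeq
  have e1 : ∀ i, y1 i = μ * y1 i := fun i => by
    have := congrFun hyeq (Sum.inl i); simpa [hy1] using this
  have e2 : QE *ᵥ (L21 *ᵥ ((2 / τ) • y1)) + (QE * SE) *ᵥ y2 = μ • y2 := by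
    funext i
    have := congrFun hyeq (Sum.inr (Sum.inl i)); simpa [hy2] using this
  have e3 : Qp *ᵥ (L31 *ᵥ ((2 / τ) • y1)) + Qp *ᵥ (L32 *ᵥ (SE *ᵥ y2)) + (Qp * Sp) *ᵥ y3
      = μ • y3 := by
    funext i
    have := congrFun hyeq (Sum.inr (Sum.inr i)); simpa [hy3] using this
  by_cases h1 : y1 = 0
  · rw [h1] at e2 e3
    simp only [smul_zero, Matrix.mulVec_zero, zero_add] at e2 e3
    by_cases h2 : y2 = 0
    · have h3 : y3 ≠ 0 := by
        intro h3
        apply hy0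
        funext i
        rcases i with i | i | i
        · exact congrFun h1 i
        · exact congrFun h2 i
        · exact congrFun h3 i
      rw [h2] at e3
      simp only [Matrix.mulVec_zero, zero_add] at e3
      exact hQpSp μ y3 h3 e3
    · exact hQESE μ y2 h2 e2
  · obtain ⟨i, hi⟩ := Function.ne_iff.mp h1
    have hμ : μ = 1 := by
      have h := e1 i
      by_contra hne
      apply hi
      have : (1 - μ) * y1 i = 0 := by linarith [h]
      rcases mul_eq_zero.mp this with h' | h'
      · exact absurd (by linarith : μ = 1) hne
      · exact h'
    rw [hμ]
    exact ⟨hc₁1, h1c₂⟩
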